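/- Let p be an odd prime and l ≥ 1, b integers. Then the Pascal-like matrix P_b^{(l)} with entries C(b + 2(r-1), c-1) is invertible over ℚ, and every entry of its inverse is a p-adic integer (i.e., has nonnegative p-adic valuation). -/

import Mathlib

/-- The generalized binomial coefficient `C(n, r) = n(n-1)⋯(n-r+1)/r!` for an
integer `n` and a natural number `r`, with values in `ℚ`. -/
noncomputable def gchoose (n : ℤ) (r : ℕ) : ℚ :=
  (∏ j ∈ Finset.range r, ((n : ℚ) - (j : ℚ))) / (r.factorial : ℚ)

open Finset Polynomial Matrix

lemma descPochhammer_eval_prod' {R : Type*} [CommRing R] (x : R) (c : ℕ) :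
    (descPochhammer R c).eval x = ∏ j ∈ range c, (x - j) := by
  induction c with
  | zero => simp
  | succ n ih =>
      rw [descPochhammer_succ_right, prod_range_succ, ← ih]
      simp

lemma gchoose_eq_ringChoose (n : ℤ) (c : ℕ) :
    gchoose n c = ((Ring.choose n c : ℤ) : ℚ) := by
  have h1 : (descPochhammer ℤ c).eval n = c.factorial • Ring.choose n c := by
    rw [Polynomial.eval_eq_smeval, Ring.descPochhammer_eq_factorial_smul_choose]
  have h2 : (∏ j ∈ range c, ((n : ℚ) - (j : ℚ))) = (((descPochhammer ℤ c).eval n : ℤ) : ℚ) := by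
    rw [descPochhammer_eval_prod']
    push_cast
    ring_nf

  rw [gchoose, h2, h1]
  field_simp
  rw [nsmul_eq_mul]
  push_cast
  ring

lemma superFactorial_pos (m : ℕ) : 0 < Nat.superFactorial m := by
  induction m with
  | zero => simp
  | succ k ih => exact Nat.mul_pos (k+1).factorial_pos ih

lemma det_pascal_like (n : ℕ) (b : ℤ) :
    (Matrix.of fun r c : Fin (n+1) => gchoose (b + 2 * (r : ℤ)) (c : ℕ)).det
      = 2 ^ (∑ i : Fin (n+1), (Ioi i).card) := by
  set v : Fin (n+1) → ℚ := fun r => (b : ℚ) + 2 * r with hv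
  have hM : (Matrix.of fun r c : Fin (n+1) => gchoose (b + 2 * (r : ℤ)) (c : ℕ))
      = (Matrix.of fun r c : Fin (n+1) => (descPochhammer ℚ (c : ℕ)).eval (v r))
        * Matrix.diagonal (fun c : Fin (n+1) => (((c : ℕ).factorial : ℚ))⁻¹) := by
    ext r c
    rw [Matrix.mul_diagonal]
    simp only [Matrix.of_apply, gchoose, descPochhammer_eval_prod', hv]
    rw [div_eq_mul_inv]
    push_cast
    ring_nf
  have hN : (Matrix.of fun r c : Fin (n+1) => (descPochhammer ℚ (c : ℕ)).eval (v r)).det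
      = (Matrix.vandermonde v).det := by
    exact (Matrix.det_eval_matrixOfPolynomials_eq_det_vandermonde v
      (fun i => descPochhammer ℚ (i : ℕ))
      (fun i => by simp) (fun i => monic_descPochhammer _ _)).symm
  have hprod : ∏ i : Fin (n+1), ∏ j ∈ Ioi i, ((j : ℚ) - (i : ℚ)) = (Nat.superFactorial n : ℚ) := by
    rw [← Matrix.det_vandermonde (fun i : Fin (n+1) => (i : ℚ))]
    exact Matrix.det_vandermonde_id_eq_superFactorial n
  have hvdm : (Matrix.vandermonde v).det
      = 2 ^ (∑ i : Fin (n+1), (Ioi i).card) * (Nat.superFactorial n : ℚ) := by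
    rw [Matrix.det_vandermonde, ← hprod]
    rw [← Finset.prod_pow_eq_pow_sum]
    rw [← Finset.prod_mul_distrib]
    refine Finset.prod_congr rfl fun i _ => ?_
    rw [← Finset.prod_const, ← Finset.prod_mul_distrib]
    refine Finset.prod_congr rfl fun j _ => ?_
    simp only [hv]
    ring
  have hdiag : (Matrix.diagonal (fun c : Fin (n+1) => (((c : ℕ).factorial : ℚ))⁻¹)).det
      = ((Nat.superFactorial n : ℚ))⁻¹ := by
    rw [Matrix.det_diagonal, Finset.prod_inv_distrib]
    congr 1
    rw [Fin.prod_univ_eq_prod_range (fun c => ((Nat.factorial c : ℚ)))]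
    rw [← Nat.cast_prod]
    rw [Nat.prod_range_succ_factorial]
  rw [hM, Matrix.det_mul, hN, hvdm, hdiag]
  have hsf : 0 < Nat.superFactorial n := superFactorial_pos n
  have : (Nat.superFactorial n : ℚ) ≠ 0 := Nat.cast_ne_zero.mpr hsf.ne'
  field_simp


/-- Let `p` be an odd prime and `l ≥ 1`, `b` integers. The Pascal-like
matrix `P_b^{(l)}` with entries `C(b + 2(r-1), c-1)` is invertible over `ℚ`, and
every entry of its inverse is a `p`-adic integer (has `p`-adic norm at most 1). -/
theorem pascal_like_matrix_inv_padic_integral (p : ℕ) [Fact p.Prime] (hp2 : p ≠ 2)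
    (l : ℕ) (hl : 1 ≤ l) (b : ℤ) :
    IsUnit (Matrix.of fun r c : Fin l => gchoose (b + 2 * (r : ℤ)) (c : ℕ)) ∧
      ∀ r c : Fin l,
        ‖(((Matrix.of fun r c : Fin l => gchoose (b + 2 * (r : ℤ)) (c : ℕ))⁻¹ r c : ℚ)
          : ℚ_[p])‖ ≤ 1 := by
  obtain ⟨n, rfl⟩ : ∃ n, l = n + 1 := ⟨l - 1, (Nat.succ_pred_eq_of_pos hl).symm⟩
  set M : Matrix (Fin (n+1)) (Fin (n+1)) ℚ :=
    Matrix.of fun r c : Fin (n+1) => gchoose (b + 2 * (r : ℤ)) (c : ℕ) with hMdef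
  set K : ℕ := ∑ i : Fin (n+1), (Ioi i).card with hK
  have hdet : M.det = 2 ^ K := det_pascal_like n b
  have hdet0 : M.det ≠ 0 := by rw [hdet]; positivity
  have hunit : IsUnit M := (Matrix.isUnit_iff_isUnit_det M).mpr (isUnit_iff_ne_zero.mpr hdet0)
  refine ⟨hunit, fun r c => ?_⟩
  have hinv : M⁻¹ r c = (M.det)⁻¹ * M.adjugate r c := by
    rw [Matrix.inv_def]
    simp [Matrix.smul_apply, Ring.inverse_eq_inv']
  set Mz : Matrix (Fin (n+1)) (Fin (n+1)) ℤ :=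
    Matrix.of fun r c : Fin (n+1) => Ring.choose (b + 2 * (r : ℤ)) (c : ℕ) with hMz
  have hmap : M = Mz.map (Int.castRingHom ℚ) := by
    ext r c
    simp [hMdef, hMz, gchoose_eq_ringChoose]
  have hadj : M.adjugate r c = ((Mz.adjugate r c : ℤ) : ℚ) := by
    rw [hmap]
    have := ((Int.castRingHom ℚ).map_adjugate Mz).symm
    rw [RingHom.mapMatrix_apply, RingHom.mapMatrix_apply] at this
    rw [this]
    rfl
  have h2 : ‖((2 : ℤ) : ℚ_[p])‖ = 1 := by
    have hle : ‖((2 : ℤ) : ℚ_[p])‖ ≤ 1 := Padic.norm_int_le_one 2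
    have hnd : ¬ ((p : ℤ) ∣ (2 : ℤ)) := by
      intro hd
      have : p ∣ 2 := by exact_mod_cast hd
      exact hp2 ((Nat.prime_dvd_prime_iff_eq (Fact.out) Nat.prime_two).mp this)
    have := (Padic.norm_intCast_lt_one_iff (p := p) (k := 2)).not.mpr hnd
    linarith [lt_or_eq_of_le hle]
  have h2' : ‖((2 : ℚ_[p]))‖ = 1 := by
    have : ((2 : ℤ) : ℚ_[p]) = (2 : ℚ_[p]) := by push_cast; ring
    rwa [this] at h2
  rw [hinv, hdet, hadj]
  push_cast
  rw [norm_mul, norm_inv, norm_pow, h2']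
  simp only [one_pow, inv_one, one_mul]
  exact Padic.norm_int_le_one _
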